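/- If ω is a nondegenerate alternating bilinear form on a 2n-dimensional real vector space V, then the n-fold wedge power ω^n (as an element of the exterior algebra of alternating forms) is nonzero. -/

import Mathlib

open Equiv Finset

/-- Entries of the standard symplectic (block diagonal) matrix. -/
noncomputable def Jfun (a b : ℕ) : ℝ :=
  if a % 2 = 0 ∧ b = a + 1 then 1 else if b % 2 = 0 ∧ a = b + 1 then -1 else 0

lemma Jfun_shift (a b : ℕ) : Jfun (a + 2) (b + 2) = Jfun a b := by
  unfold Jfun
  have h1 : ((a+2) % 2 = 0 ∧ b+2 = (a+2)+1) ↔ (a % 2 = 0 ∧ b = a + 1) := by omega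
  have h2 : ((b+2) % 2 = 0 ∧ a+2 = (b+2)+1) ↔ (b % 2 = 0 ∧ a = b + 1) := by omega
  rw [if_congr h1 rfl (if_congr h2 rfl rfl)]

lemma Jfun_partner {a b : ℕ} (h : Jfun a b ≠ 0) :
    b = (if a % 2 = 0 then a + 1 else a - 1) := by
  unfold Jfun at h
  split_ifs at h with h1 h2
  · rw [if_pos h1.1]; exact h1.2
  · rw [if_neg (by omega : ¬ a % 2 = 0)]; omega
  · exact absurd rfl h

lemma Jfun_val {a b : ℕ} (hb : b = (if a % 2 = 0 then a + 1 else a - 1)) (ha : a % 2 = 1 → 0 < a) :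
    Jfun a b = (if a % 2 = 0 then (1:ℝ) else -1) := by
  unfold Jfun
  by_cases h : a % 2 = 0
  · rw [if_pos h] at hb; rw [if_pos ⟨h, hb⟩, if_pos h]
  · rw [if_neg h] at hb
    rw [if_neg (by omega), if_pos ⟨by omega, by omega⟩, if_neg h]

lemma Jfun_diag (a : ℕ) : Jfun (2*a) (2*a+1) = 1 := by
  unfold Jfun; rw [if_pos ⟨by omega, rfl⟩]
open Equiv Finset

/-- first index of the `i`-th block -/
def dd0 {n : ℕ} (i : Fin n) : Fin (2*n) := ⟨2*i.val, by have := i.2; omega⟩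
/-- second index of the `i`-th block -/
def dd1 {n : ℕ} (i : Fin n) : Fin (2*n) := ⟨2*i.val+1, by have := i.2; omega⟩
/-- block of an index -/
def half {n : ℕ} (x : Fin (2*n)) : Fin n := ⟨x.val / 2, by have := x.2; omega⟩
/-- partner of an index within its block -/
def pm {n : ℕ} (x : Fin (2*n)) : Fin (2*n) :=
  ⟨if x.val % 2 = 0 then x.val + 1 else x.val - 1, by have := x.2; split_ifs <;> omega⟩

@[simp] lemma dd0_val {n : ℕ} (i : Fin n) : (dd0 i).val = 2*i.val := rfl
@[simp] lemma dd1_val {n : ℕ} (i : Fin n) : (dd1 i).val = 2*i.val+1 := rfl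
@[simp] lemma half_val {n : ℕ} (x : Fin (2*n)) : (half x).val = x.val / 2 := rfl
@[simp] lemma pm_val {n : ℕ} (x : Fin (2*n)) :
    (pm x).val = if x.val % 2 = 0 then x.val + 1 else x.val - 1 := rfl

lemma pm_pm {n : ℕ} (x : Fin (2*n)) : pm (pm x) = x := by
  have := x.2
  apply Fin.ext; simp only [pm_val]; split_ifs <;> omega

lemma half_pm {n : ℕ} (x : Fin (2*n)) : half (pm x) = half x := by
  apply Fin.ext; simp only [half_val, pm_val]; split_ifs <;> omega

/-- permutation swapping within the blocks listed in `T` -/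
def qT {n : ℕ} (T : Finset (Fin n)) : Equiv.Perm (Fin (2*n)) :=
  Function.Involutive.toPerm (fun x => if half x ∈ T then pm x else x) (by
    intro x
    dsimp only
    by_cases h : half x ∈ T
    · rw [if_pos h, if_pos (by rwa [half_pm]), pm_pm]
    · rw [if_neg h, if_neg h])

lemma qT_apply {n : ℕ} (T : Finset (Fin n)) (x : Fin (2*n)) :
    qT T x = if half x ∈ T then pm x else x := rfl

lemma sign_qT {n : ℕ} (T : Finset (Fin n)) : Equiv.Perm.sign (qT T) = (-1)^T.card := by
  classical
  induction T using Finset.induction_on with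
  | empty =>
      have h1 : qT (∅ : Finset (Fin n)) = 1 := by
        ext x; simp [qT_apply]
      rw [h1]; simp
  | @insert j T hj ih =>
      have key : qT (insert j T) = Equiv.swap (dd0 j) (dd1 j) * qT T := by
        ext x
        have hx2 := x.2
        rw [Equiv.Perm.mul_apply, qT_apply, qT_apply]
        by_cases h1 : half x = j
        · have hxT : half x ∉ T := h1 ▸ hj
          rw [if_pos (by simp [h1]), if_neg hxT]
          have hj1 : x.val / 2 = j.val := congrArg Fin.val h1
          by_cases he : x.val % 2 = 0
          · have hx : x = dd0 j := by apply Fin.ext; simp only [dd0_val]; omega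
            rw [hx, Equiv.swap_apply_left]
            simp only [pm_val, dd0_val, dd1_val]
            show (if 2 * j.val % 2 = 0 then 2 * j.val + 1 else 2 * j.val - 1) = 2 * j.val + 1
            rw [if_pos (by omega)]
          · have hx : x = dd1 j := by apply Fin.ext; simp only [dd1_val]; omega
            rw [hx, Equiv.swap_apply_right]
            simp only [pm_val, dd0_val, dd1_val]
            show (if (2 * j.val + 1) % 2 = 0 then 2 * j.val + 1 + 1 else 2 * j.val + 1 - 1) = 2 * j.val
            rw [if_neg (by omega)]; omega
        · have e1 : (half x ∈ insert j T) ↔ (half x ∈ T) := by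
            simp [Finset.mem_insert, h1]
          rw [if_congr e1 rfl rfl]
          have hne : ∀ y : Fin (2*n), half y = half x → y ≠ dd0 j ∧ y ≠ dd1 j := by
            intro y hy
            constructor <;> intro hc <;> apply h1 <;> rw [← hy, hc] <;>
              apply Fin.ext <;> simp only [half_val, dd0_val, dd1_val] <;> omega
          by_cases h2 : half x ∈ T
          · rw [if_pos h2]
            obtain ⟨c1, c2⟩ := hne (pm x) (half_pm x)
            rw [Equiv.swap_apply_of_ne_of_ne c1 c2]
          · rw [if_neg h2]
            obtain ⟨c1, c2⟩ := hne x rfl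
            rw [Equiv.swap_apply_of_ne_of_ne c1 c2]
      rw [key, map_mul, ih, Equiv.Perm.sign_swap (by simp [Fin.ext_iff]),
        Finset.card_insert_of_notMem hj, pow_succ, mul_comm]
/-- pairing equivalence: `(c, i) ↦ 2i + c` -/
def e2 (n : ℕ) : Fin 2 × Fin n ≃ Fin (2*n) where
  toFun p := ⟨2 * p.2.val + p.1.val, by have := p.1.2; have := p.2.2; omega⟩
  invFun x := (⟨x.val % 2, by omega⟩, half x)
  left_inv := by
    rintro ⟨⟨c, hc⟩, ⟨i, hi⟩⟩
    simp only [Prod.mk.injEq, half]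
    constructor <;> apply Fin.ext <;> simp <;> omega
  right_inv := by
    rintro ⟨x, hx⟩
    apply Fin.ext; simp [half]; omega

/-- lift of a permutation of blocks to a block-preserving permutation -/
def Lp {n : ℕ} (π : Equiv.Perm (Fin n)) : Equiv.Perm (Fin (2*n)) :=
  (e2 n).permCongr (Equiv.prodCongrRight fun _ => π)

lemma Lp_apply_val {n : ℕ} (π : Equiv.Perm (Fin n)) (x : Fin (2*n)) :
    ((Lp π) x).val = 2 * (π (half x)).val + x.val % 2 := by
  rfl

lemma sign_Lp {n : ℕ} (π : Equiv.Perm (Fin n)) : Equiv.Perm.sign (Lp π) = 1 := by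
  unfold Lp
  rw [Equiv.Perm.sign_permCongr, Equiv.Perm.sign_prodCongrRight]
  rw [Finset.prod_const]
  simp [sq, Int.units_mul_self]

/-- the key sign computation: any block-compatible permutation contributes `+1` -/
lemma term_eq_one {n : ℕ} (σ : Equiv.Perm (Fin (2*n)))
    (h : ∀ i : Fin n, (σ (dd1 i)).val =
        (if (σ (dd0 i)).val % 2 = 0 then (σ (dd0 i)).val + 1 else (σ (dd0 i)).val - 1)) :
    ((Equiv.Perm.sign σ : ℤ) : ℝ) *
      ∏ i : Fin n, (if (σ (dd0 i)).val % 2 = 0 then (1:ℝ) else -1) = 1 := by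
  classical
  -- the induced permutation on blocks
  have hinj : Function.Injective (fun i : Fin n => half (σ (dd0 i))) := by
    intro i j hij
    have hv : (σ (dd0 i)).val / 2 = (σ (dd0 j)).val / 2 := by
      have := congrArg Fin.val hij
      simpa [half_val] using this
    have hpj := h j
    have hdone : (σ (dd0 i)).val = (σ (dd1 j)).val → i = j := by
      intro hc
      have h2 : dd0 i = dd1 j := σ.injective (Fin.ext hc)
      have := congrArg Fin.val h2
      simp only [dd0_val, dd1_val] at this
      omega
    have hsame : (σ (dd0 i)).val = (σ (dd0 j)).val → i = j := by
      intro hc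
      have h2 : dd0 i = dd0 j := σ.injective (Fin.ext hc)
      have := congrArg Fin.val h2
      simp only [dd0_val] at this
      exact Fin.ext (by omega)
    rcases Nat.mod_two_eq_zero_or_one (σ (dd0 j)).val with h0 | h0
    · rw [if_pos h0] at hpj
      rcases (by omega : (σ (dd0 i)).val = (σ (dd0 j)).val ∨
          (σ (dd0 i)).val = (σ (dd0 j)).val + 1) with hc | hc
      · exact hsame hc
      · exact hdone (by omega)
    · rw [if_neg (by omega)] at hpj
      rcases (by omega : (σ (dd0 i)).val = (σ (dd0 j)).val ∨
          (σ (dd0 i)).val = (σ (dd0 j)).val - 1) with hc | hc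
      · exact hsame hc
      · exact hdone (by omega)
  let π : Equiv.Perm (Fin n) :=
    Equiv.ofBijective _ (Finite.injective_iff_bijective.mp hinj)
  have hπ : ∀ i : Fin n, (π i).val = (σ (dd0 i)).val / 2 := fun i => rfl
  set T : Finset (Fin n) := Finset.univ.filter (fun i => (σ (dd0 i)).val % 2 = 1) with hT
  -- decomposition
  have hdec : σ = Lp π * qT T := by
    ext x
    have hx2 := x.2
    rw [Equiv.Perm.mul_apply, qT_apply]
    have hmem : (half x ∈ T) ↔ (σ (dd0 (half x))).val % 2 = 1 := by
      rw [hT]; simp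
    have hbd := (σ (dd0 (half x))).2
    have hp := h (half x)
    have hπi := hπ (half x)
    by_cases he : x.val % 2 = 0
    · have hx : x = dd0 (half x) := by
        apply Fin.ext; simp only [dd0_val, half_val]; omega
      by_cases hm : half x ∈ T
      · have hodd := hmem.mp hm
        rw [if_pos hm, Lp_apply_val, half_pm, pm_val, if_pos he]
        conv_lhs => rw [hx]
        omega
      · have heven : (σ (dd0 (half x))).val % 2 = 0 := by
          rcases Nat.mod_two_eq_zero_or_one (σ (dd0 (half x))).val with h0 | h0
          · exact h0
          · exact absurd (hmem.mpr h0) hm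
        rw [if_neg hm, Lp_apply_val]
        conv_lhs => rw [hx]
        omega
    · have hx : x = dd1 (half x) := by
        apply Fin.ext; simp only [dd1_val, half_val]; omega
      by_cases hm : half x ∈ T
      · have hodd := hmem.mp hm
        rw [if_pos hm, Lp_apply_val, half_pm, pm_val, if_neg he]
        conv_lhs => rw [hx]
        rw [if_neg (by omega)] at hp
        omega
      · have heven : (σ (dd0 (half x))).val % 2 = 0 := by
          rcases Nat.mod_two_eq_zero_or_one (σ (dd0 (half x))).val with h0 | h0
          · exact h0
          · exact absurd (hmem.mpr h0) hm
        rw [if_neg hm, Lp_apply_val]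
        conv_lhs => rw [hx]
        rw [if_pos heven] at hp
        omega
  -- sign
  have hsign : Equiv.Perm.sign σ = (-1)^T.card := by
    rw [hdec, map_mul, sign_Lp, sign_qT, one_mul]
  -- product
  have hprod : ∏ i : Fin n, (if (σ (dd0 i)).val % 2 = 0 then (1:ℝ) else -1)
      = (-1)^T.card := by
    have heq : ∀ i : Fin n, (if (σ (dd0 i)).val % 2 = 0 then (1:ℝ) else -1)
        = (if i ∈ T then (-1:ℝ) else 1) := by
      intro i
      have : (i ∈ T) ↔ (σ (dd0 i)).val % 2 = 1 := by rw [hT]; simp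
      by_cases hm : (σ (dd0 i)).val % 2 = 1
      · rw [if_neg (by omega), if_pos (this.mpr hm)]
      · rw [if_pos (by omega), if_neg (fun hc => hm (this.mp hc))]
    rw [Finset.prod_congr rfl (fun i _ => heq i)]
    rw [Finset.prod_ite_mem, Finset.univ_inter, Finset.prod_const]
  rw [hsign, hprod]
  push_cast
  rw [← mul_pow]
  norm_num
lemma Jfun_eq_zero {a b : ℕ} (h1 : ¬(a % 2 = 0 ∧ b = a + 1)) (h2 : ¬(b % 2 = 0 ∧ a = b + 1)) :
    Jfun a b = 0 := by
  unfold Jfun; rw [if_neg h1, if_neg h2]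

lemma sumJ_pos (n : ℕ) :
    0 < ∑ σ : Equiv.Perm (Fin (2*n)),
      ((Equiv.Perm.sign σ : ℤ) : ℝ) *
        ∏ i : Fin n, Jfun (σ (dd0 i)).val (σ (dd1 i)).val := by
  apply Finset.sum_pos'
  · intro σ _
    by_cases hz : ∀ i : Fin n, Jfun (σ (dd0 i)).val (σ (dd1 i)).val ≠ 0
    · have hp : ∀ i : Fin n, (σ (dd1 i)).val =
          (if (σ (dd0 i)).val % 2 = 0 then (σ (dd0 i)).val + 1 else (σ (dd0 i)).val - 1) :=
        fun i => Jfun_partner (hz i)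
      have hval : ∀ i : Fin n, Jfun (σ (dd0 i)).val (σ (dd1 i)).val
          = (if (σ (dd0 i)).val % 2 = 0 then (1:ℝ) else -1) :=
        fun i => Jfun_val (hp i) (fun _ => by omega)
      have hpr : ∏ i : Fin n, Jfun (σ (dd0 i)).val (σ (dd1 i)).val
          = ∏ i : Fin n, (if (σ (dd0 i)).val % 2 = 0 then (1:ℝ) else -1) :=
        Finset.prod_congr rfl (fun i _ => hval i)
      rw [hpr, term_eq_one σ hp]
      norm_num
    · push_neg at hz
      obtain ⟨i, hi⟩ := hz
      rw [Finset.prod_eq_zero (Finset.mem_univ i) hi, mul_zero]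
  · refine ⟨1, Finset.mem_univ 1, ?_⟩
    have h1 : ∀ i : Fin n, Jfun (((1 : Equiv.Perm (Fin (2*n))) (dd0 i)).val)
        (((1 : Equiv.Perm (Fin (2*n))) (dd1 i)).val) = 1 := by
      intro i
      simp only [Equiv.Perm.one_apply, dd0_val, dd1_val]
      exact Jfun_diag i.val
    rw [Finset.prod_congr rfl (fun i _ => h1 i), Finset.prod_const_one]
    simp

lemma exists_gram : ∀ (n : ℕ) (V : Type*) [AddCommGroup V] [Module ℝ V]
    [FiniteDimensional ℝ V],
    Module.finrank ℝ V = 2 * n → ∀ (ω : V →ₗ[ℝ] V →ₗ[ℝ] ℝ),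
    (∀ v, ω v v = 0) → (∀ v, (∀ x, ω v x = 0) → v = 0) →
    ∃ e : Fin (2*n) → V, ∀ a b : Fin (2*n), ω (e a) (e b) = Jfun a.val b.val := by
  intro n
  induction n with
  | zero =>
      intro V _ _ _ hdim ω halt hnd
      exact ⟨fun i => absurd i.2 (by omega), fun a b => absurd a.2 (by omega)⟩
  | succ n ih =>
      intro V _ _ _ hdim ω halt hnd
      have hskew : ∀ x y : V, ω x y = - ω y x := by
        intro x y
        have h1 := halt (x + y)
        simp only [map_add, LinearMap.add_apply] at h1
        rw [halt x, halt y] at h1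
        linarith
      have : Nontrivial V := Module.nontrivial_of_finrank_pos (R := ℝ) (M := V) (by omega)
      obtain ⟨u, hu⟩ := exists_ne (0 : V)
      have hex : ∃ w', ω u w' ≠ 0 := by
        by_contra hc
        push_neg at hc
        exact hu (hnd u hc)
      obtain ⟨w', hw'⟩ := hex
      set w : V := (ω u w')⁻¹ • w' with hwdef
      have huw : ω u w = 1 := by
        rw [hwdef, map_smul, smul_eq_mul, inv_mul_cancel₀ hw']
      have huu : ω u u = 0 := halt u
      have hww : ω w w = 0 := halt w
      have hwu : ω w u = -1 := by rw [hskew w u, huw]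
      set f : V →ₗ[ℝ] ℝ × ℝ := LinearMap.prod (ω u) (ω w) with hfdef
      have hfapp : ∀ x : V, f x = (ω u x, ω w x) := fun x => rfl
      have hsurj : Function.Surjective f := by
        intro p
        refine ⟨p.1 • w - p.2 • u, ?_⟩
        rw [hfapp]
        apply Prod.ext <;>
          simp only [map_sub, map_smul, huu, hww, huw, hwu, smul_eq_mul] <;> ring_nf <;> simp
      set W := LinearMap.ker f with hWdef
      have hWdim : Module.finrank ℝ W = 2 * n := by
        show Module.finrank ℝ (LinearMap.ker f) = 2 * n
        have hr := LinearMap.finrank_range_add_finrank_ker f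
        rw [LinearMap.range_eq_top.mpr hsurj, finrank_top] at hr
        have h2 : Module.finrank ℝ (ℝ × ℝ) = 2 := by
          simp [Module.finrank_prod]
        rw [h2, hdim] at hr
        omega
      set ω' : W →ₗ[ℝ] W →ₗ[ℝ] ℝ := ω.compl₁₂ W.subtype W.subtype with hω'def
      have hω'app : ∀ x y : W, ω' x y = ω x.1 y.1 := fun x y => rfl
      have hWmem : ∀ x : W, ω u x.1 = 0 ∧ ω w x.1 = 0 := by
        intro x
        have := x.2
        rw [LinearMap.mem_ker, hfapp] at this
        exact ⟨congrArg Prod.fst this, congrArg Prod.snd this⟩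
      have halt' : ∀ v : W, ω' v v = 0 := fun v => halt v.1
      have hnd' : ∀ v : W, (∀ x : W, ω' v x = 0) → v = 0 := by
        intro v hv
        obtain ⟨hvu, hvw⟩ := hWmem v
        have hvu' : ω v.1 u = 0 := by rw [hskew]; rw [hvu]; ring
        have hvw' : ω v.1 w = 0 := by rw [hskew]; rw [hvw]; ring
        have key : ∀ x : V, ω v.1 x = 0 := by
          intro x
          have hx'W : (x - (ω u x) • w + (ω w x) • u) ∈ W := by
            rw [hWdef, LinearMap.mem_ker, hfapp]
            apply Prod.ext <;>
              simp only [map_add, map_sub, map_smul, huu, hww, huw, hwu, smul_eq_mul] <;>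
              ring_nf <;> simp
          have h0 : ω v.1 (x - (ω u x) • w + (ω w x) • u) = 0 := hv ⟨_, hx'W⟩
          simp only [map_add, map_sub, map_smul, hvu', hvw', smul_eq_mul, mul_zero,
            sub_zero, add_zero] at h0
          exact h0
        exact Subtype.ext (hnd v.1 key)
      obtain ⟨e', he'⟩ := ih W hWdim ω' halt' hnd'
      refine ⟨fun a => if h0 : a.val = 0 then u else if h1 : a.val = 1 then w
        else (e' ⟨a.val - 2, by have := a.2; omega⟩ : W).1, ?_⟩
      intro a b
      dsimp only
      have ha2 := a.2
      have hb2 := b.2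
      have hue : ∀ k, ω u (e' k).1 = 0 := fun k => (hWmem (e' k)).1
      have hwe : ∀ k, ω w (e' k).1 = 0 := fun k => (hWmem (e' k)).2
      have heu : ∀ k, ω (e' k).1 u = 0 := by intro k; rw [hskew, hue]; ring
      have hew : ∀ k, ω (e' k).1 w = 0 := by intro k; rw [hskew, hwe]; ring
      by_cases ha0 : a.val = 0 <;> by_cases ha1 : a.val = 1 <;>
        by_cases hb0 : b.val = 0 <;> by_cases hb1 : b.val = 1
      all_goals first | omega | skip
      · -- a = 0, b = 0
        rw [dif_pos ha0, dif_pos hb0, ha0, hb0, huu, Jfun_eq_zero (by omega) (by omega)]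
      · -- a = 0, b = 1
        rw [dif_pos ha0, dif_neg (by omega), dif_pos hb1, ha0, hb1, huw]
        unfold Jfun; rw [if_pos (by omega)]
      · -- a = 0, b ≥ 2
        rw [dif_pos ha0, dif_neg hb0, dif_neg hb1, ha0, hue,
          Jfun_eq_zero (by omega) (by omega)]
      · -- a = 1, b = 0
        rw [dif_neg (by omega), dif_pos ha1, dif_pos hb0, ha1, hb0, hwu]
        unfold Jfun; rw [if_neg (by omega), if_pos (by omega)]
      · -- a = 1, b = 1
        rw [dif_neg (by omega), dif_pos ha1, dif_neg hb0, dif_pos hb1, ha1, hb1, hww,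
          Jfun_eq_zero (by omega) (by omega)]
      · -- a = 1, b ≥ 2
        rw [dif_neg (by omega), dif_pos ha1, dif_neg hb0, dif_neg hb1, ha1, hwe,
          Jfun_eq_zero (by omega) (by omega)]
      · -- a ≥ 2, b = 0
        rw [dif_neg ha0, dif_neg ha1, dif_pos hb0, hb0, heu,
          Jfun_eq_zero (by omega) (by omega)]
      · -- a ≥ 2, b = 1
        rw [dif_neg ha0, dif_neg ha1, dif_neg (by omega), dif_pos hb1, hb1, hew,
          Jfun_eq_zero (by omega) (by omega)]
      · -- a ≥ 2, b ≥ 2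
        rw [dif_neg ha0, dif_neg ha1, dif_neg hb0, dif_neg hb1]
        have h1 := he' ⟨a.val - 2, by omega⟩ ⟨b.val - 2, by omega⟩
        rw [hω'app] at h1
        rw [h1]
        have h2 := Jfun_shift (a.val - 2) (b.val - 2)
        rw [show a.val - 2 + 2 = a.val by omega, show b.val - 2 + 2 = b.val by omega] at h2
        exact h2.symm




/-- The `n`-fold wedge power of a bilinear form `ω` on a `2n`-dimensional space,
evaluated on a tuple of `2n` vectors, given by the standard alternating-sum formula
`ωⁿ(v₁,…,v_{2n}) = ∑_{σ} sgn σ ∏_{i<n} ω(v_{σ(2i)}, v_{σ(2i+1)})`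
(up to an overall nonzero constant, which does not affect nonvanishing). -/
noncomputable def wedgePowEval {V : Type*} [AddCommGroup V] [Module ℝ V]
    (ω : V →ₗ[ℝ] V →ₗ[ℝ] ℝ) (n : ℕ) (v : Fin (2 * n) → V) : ℝ :=
  ∑ σ : Equiv.Perm (Fin (2 * n)),
    (Equiv.Perm.sign σ : ℤ) *
      ∏ i : Fin n,
        ω (v (σ ⟨2 * (i : ℕ), by omega⟩)) (v (σ ⟨2 * (i : ℕ) + 1, by omega⟩))

/-- If `ω` is a nondegenerate alternating bilinear form on a `2n`-dimensional real
vector space `V`, then the top-degree alternating form `ωⁿ` is nonzero. -/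
theorem wedge_pow_ne_zero
    (V : Type*) [AddCommGroup V] [Module ℝ V] [FiniteDimensional ℝ V] (n : ℕ)
    (hdim : Module.finrank ℝ V = 2 * n)
    (ω : V →ₗ[ℝ] V →ₗ[ℝ] ℝ)
    (halt : ∀ v : V, ω v v = 0)
    (hnd : ∀ v : V, (∀ w : V, ω v w = 0) → v = 0) :
    ∃ v : Fin (2 * n) → V, wedgePowEval ω n v ≠ 0 := by
  obtain ⟨e, he⟩ := exists_gram n V hdim ω halt hnd
  refine ⟨e, ?_⟩
  have hrw : wedgePowEval ω n e = ∑ σ : Equiv.Perm (Fin (2*n)),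
      ((Equiv.Perm.sign σ : ℤ) : ℝ) * ∏ i : Fin n, Jfun (σ (dd0 i)).val (σ (dd1 i)).val := by
    unfold wedgePowEval
    refine Finset.sum_congr rfl (fun σ _ => ?_)
    congr 1
    refine Finset.prod_congr rfl (fun i _ => ?_)
    exact he _ _
  rw [hrw]
  exact ne_of_gt (sumJ_pos n)
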